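/- arXiv:1601.07322 — 3 statements merged into one kernel-verified Lean document; each statement's English description precedes it below -/
import Mathlib

section
/- Under the KKT conditions for the convex program minimizing F(b) = ∑_j a_j ∑_n (1-b_j)^n p_n q_{j,n} over {b ∈ [0,1]^J : ∑_j b_j = K}, if the multiplier ν̄ satisfies ν̄ < a_j p_1 q_{j,1}, then the optimal solution has b̄_j = 1. -/
/-- KKT conditions for the caching problem: if the multiplier `ν` satisfies
`ν < a j * p 1 * q j 1`, then the optimal solution has `b̄ j = 1`. -/
theorem stmt5 (J : ℕ) (a : Fin J → ℝ) (p : ℕ → ℝ) (q : Fin J → ℕ → ℝ) (K : ℝ)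
    (ha : ∀ j, 0 ≤ a j) (hp : ∀ n, 0 ≤ p n) (hppmf : ∑' n, p n = 1)
    (hq : ∀ j n, q j n ∈ Set.Icc (0:ℝ) 1)
    (b : Fin J → ℝ) (lam om : Fin J → ℝ) (ν : ℝ)
    (hb : ∀ j, b j ∈ Set.Icc (0:ℝ) 1) (hcap : ∑ j, b j = K)
    (hlam : ∀ j, 0 ≤ lam j) (hom : ∀ j, 0 ≤ om j)
    (hcs1 : ∀ j, lam j * b j = 0) (hcs2 : ∀ j, om j * (b j - 1) = 0)
    (hder : ∀ j, Summable (fun n : ℕ => ((n:ℝ) + 1) * (1 - b j) ^ n * p (n + 1) * q j (n + 1)))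
    (hstat : ∀ j, a j * ∑' n : ℕ, ((n:ℝ) + 1) * (1 - b j) ^ n * p (n + 1) * q j (n + 1)
      = ν - lam j + om j)
    (j : Fin J) (hν : ν < a j * (p 1 * q j 1)) :
    b j = 1 := by
  by_contra hne
  have hbj := hb j
  have hblt : b j < 1 := lt_of_le_of_ne hbj.2 hne
  have hom0 : om j = 0 := by
    have := hcs2 j
    have hne' : b j - 1 ≠ 0 := sub_ne_zero.mpr hne
    exact (mul_eq_zero.mp this).resolve_right hne'
  have hnn : ∀ n : ℕ, 0 ≤ ((n:ℝ) + 1) * (1 - b j) ^ n * p (n + 1) * q j (n + 1) := by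
    intro n
    have h1 : (0:ℝ) ≤ (n:ℝ) + 1 := by positivity
    have h2 : (0:ℝ) ≤ (1 - b j) ^ n := pow_nonneg (by linarith [hbj.2]) n
    exact mul_nonneg (mul_nonneg (mul_nonneg h1 h2) (hp _)) (hq j _).1
  have hterm : p 1 * q j 1 ≤ ∑' n : ℕ, ((n:ℝ) + 1) * (1 - b j) ^ n * p (n + 1) * q j (n + 1) := by
    have := Summable.le_tsum (hder j) 0 (fun n _ => hnn n)
    simpa using this
  have hlow : a j * (p 1 * q j 1) ≤ a j * ∑' n : ℕ,
      ((n:ℝ) + 1) * (1 - b j) ^ n * p (n + 1) * q j (n + 1) :=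
    mul_le_mul_of_nonneg_left hterm (ha j)
  have := hstat j
  rw [hom0] at this
  have hlamj := hlam j
  linarith
end

section
/- Under the same KKT conditions, if ν̄ > a_j ∑_{n=1}^∞ n p_n q_{j,n}, then the optimal solution has b̄_j = 0. -/
/-- KKT conditions for the caching problem: if the multiplier `ν` satisfies
`ν > a j * ∑ n, n * p n * q j n`, then the optimal solution has `b̄ j = 0`. -/
theorem stmt6 (J : ℕ) (a : Fin J → ℝ) (p : ℕ → ℝ) (q : Fin J → ℕ → ℝ) (K : ℝ)
    (ha : ∀ j, 0 ≤ a j) (hp : ∀ n, 0 ≤ p n) (hppmf : ∑' n, p n = 1)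
    (hq : ∀ j n, q j n ∈ Set.Icc (0:ℝ) 1)
    (b : Fin J → ℝ) (lam om : Fin J → ℝ) (ν : ℝ)
    (hb : ∀ j, b j ∈ Set.Icc (0:ℝ) 1) (hcap : ∑ j, b j = K)
    (hlam : ∀ j, 0 ≤ lam j) (hom : ∀ j, 0 ≤ om j)
    (hcs1 : ∀ j, lam j * b j = 0) (hcs2 : ∀ j, om j * (b j - 1) = 0)
    (hsum : ∀ j, Summable (fun n : ℕ => (n:ℝ) * p n * q j n))
    (hder : ∀ j, Summable (fun n : ℕ => ((n:ℝ) + 1) * (1 - b j) ^ n * p (n + 1) * q j (n + 1)))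
    (hstat : ∀ j, a j * ∑' n : ℕ, ((n:ℝ) + 1) * (1 - b j) ^ n * p (n + 1) * q j (n + 1)
      = ν - lam j + om j)
    (j : Fin J) (hν : ν > a j * ∑' n : ℕ, (n:ℝ) * p n * q j n) :
    b j = 0 := by
  obtain ⟨hb0, hb1⟩ := hb j
  have h1b0 : (0:ℝ) ≤ 1 - b j := by linarith
  have h1b1 : 1 - b j ≤ 1 := by linarith
  -- shifted summable
  have hshsum : Summable (fun n : ℕ => ((n:ℝ) + 1) * p (n + 1) * q j (n + 1)) := by
    have := (summable_nat_add_iff 1).mpr (hsum j)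
    simpa [Nat.cast_add] using this
  -- termwise inequality
  have hle : ∀ n : ℕ, ((n:ℝ) + 1) * (1 - b j) ^ n * p (n + 1) * q j (n + 1)
      ≤ ((n:ℝ) + 1) * p (n + 1) * q j (n + 1) := by
    intro n
    have hpow : (1 - b j) ^ n ≤ 1 := pow_le_one₀ h1b0 h1b1
    have hnn : (0:ℝ) ≤ ((n:ℝ) + 1) * p (n + 1) * q j (n + 1) :=
      mul_nonneg (mul_nonneg (by positivity) (hp _)) (hq j _).1
    nlinarith [mul_nonneg (mul_nonneg (by positivity : (0:ℝ) ≤ (n:ℝ)+1) (hp (n+1))) (hq j (n+1)).1]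
  have htsumle : (∑' n : ℕ, ((n:ℝ) + 1) * (1 - b j) ^ n * p (n + 1) * q j (n + 1))
      ≤ ∑' n : ℕ, ((n:ℝ) + 1) * p (n + 1) * q j (n + 1) :=
    Summable.tsum_le_tsum hle (hder j) hshsum
  -- rewrite RHS tsum as original tsum
  have hzero : (∑' n : ℕ, (n:ℝ) * p n * q j n)
      = ∑' n : ℕ, ((n:ℝ) + 1) * p (n + 1) * q j (n + 1) := by
    rw [Summable.tsum_eq_zero_add (hsum j)]
    simp [Nat.cast_add]
  have hkey : a j * ∑' n : ℕ, ((n:ℝ) + 1) * (1 - b j) ^ n * p (n + 1) * q j (n + 1)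
      ≤ a j * ∑' n : ℕ, (n:ℝ) * p n * q j n := by
    rw [hzero]
    exact mul_le_mul_of_nonneg_left htsumle (ha j)
  rw [hstat j] at hkey
  have hlamj : lam j ≠ 0 := by
    have := hom j
    intro h
    rw [h] at hkey
    linarith
  have := hcs1 j
  rcases mul_eq_zero.mp this with h | h
  · exact absurd h hlamj
  · exact h
end

section
/- Let b_j ∈ [0,1] with ∑_{j=1}^J b_j = K for an integer K with 1 ≤ K ≤ J. Partition [0, K) into consecutive half-open intervals I_1, …, I_J of lengths b_1, …, b_J (wrapping the line [0,K) and viewing positions modulo 1). Then for u uniform on [0,1), the set S(u) = {j : I_j ∩ ({u, u+1, …, u+K−1}) ≠ ∅} satisfies |S(u)| = K almost surely, and P(j ∈ S(u)) = b_j for every j. -/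
open MeasureTheory Set

/-- Realization of probabilistic placement: partition `[0, K)` into consecutive
half-open intervals of lengths `b 0, …, b (J-1)` and pick the `K` points
`u, u+1, …, u+K-1` for `u` uniform on `[0,1)`. Then almost surely exactly `K`
distinct files are selected, and file `j` is selected with probability `b j`. -/
theorem stmt14 (J K : ℕ) (hK1 : 1 ≤ K) (hKJ : K ≤ J)
    (b : ℕ → ℝ) (hb : ∀ j < J, b j ∈ Set.Icc (0:ℝ) 1)
    (hcap : ∑ j ∈ Finset.range J, b j = (K : ℝ))
    (c : ℕ → ℝ) (hc : ∀ m, c m = ∑ i ∈ Finset.range m, b i) :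
    (∀ᵐ u ∂(MeasureTheory.volume.restrict (Set.Ico (0:ℝ) 1)),
      Set.ncard {j : ℕ | j < J ∧ ∃ k < K, c j ≤ u + k ∧ u + k < c (j + 1)} = K) ∧
    (∀ j < J,
      MeasureTheory.volume
        {u : ℝ | u ∈ Set.Ico (0:ℝ) 1 ∧ ∃ k < K, c j ≤ u + k ∧ u + k < c (j + 1)}
        = ENNReal.ofReal (b j)) := by
  classical
  have hc0 : c 0 = 0 := by simp [hc]
  have hcJ : c J = (K : ℝ) := by rw [hc]; exact hcap
  have hmono : ∀ m n, m ≤ n → n ≤ J → c m ≤ c n := by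
    intro m n hmn hnJ
    rw [hc, hc]
    refine Finset.sum_le_sum_of_subset_of_nonneg
      (Finset.range_subset_range.2 hmn) (fun i hi _ => ?_)
    exact (hb i (lt_of_lt_of_le (Finset.mem_range.1 hi) hnJ)).1
  have hstep : ∀ j, c (j + 1) = c j + b j := by
    intro j; rw [hc, hc, Finset.sum_range_succ]
  -- the key uniqueness of the integer shift
  have hkey : ∀ j < J, ∀ (x : ℝ) (k k' : ℕ),
      c j ≤ x + k → x + k < c (j + 1) → c j ≤ x + k' → x + k' < c (j + 1) → k = k' := by
    intro j hj x k k' h1 h2 h3 h4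
    by_contra hne
    have hb1 := (hb j hj).2
    have hs := hstep j
    rcases Nat.lt_or_ge k k' with h | h
    · have hkk : (k : ℝ) + 1 ≤ (k' : ℝ) := by exact_mod_cast h
      linarith
    · have hlt : k' < k := lt_of_le_of_ne h (Ne.symm hne)
      have hkk : (k' : ℝ) + 1 ≤ (k : ℝ) := by exact_mod_cast hlt
      linarith
  -- uniqueness of the interval containing a point
  have huniq : ∀ (x : ℝ), ∀ j, j ≤ J → ∀ j', j' ≤ J →
      c j ≤ x → x < c (j + 1) → c j' ≤ x → x < c (j' + 1) → j = j' := by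
    intro x j hj j' hj' h1 h2 h3 h4
    by_contra hne
    rcases Nat.lt_or_ge j j' with h | h
    · have : c (j + 1) ≤ c j' := hmono _ _ h hj'
      linarith
    · have hlt : j' < j := lt_of_le_of_ne h (Ne.symm hne)
      have : c (j' + 1) ≤ c j := hmono _ _ hlt hj
      linarith
  -- existence of the interval containing a point of [0, K)
  have hex : ∀ x : ℝ, 0 ≤ x → x < (K : ℝ) → ∃ j, j < J ∧ c j ≤ x ∧ x < c (j + 1) := by
    intro x hx0 hxK
    have hPJ : x < c J := by rw [hcJ]; exact hxK
    have hne : ∃ m, x < c m := ⟨J, hPJ⟩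
    have hm0J : Nat.find hne ≤ J := Nat.find_le hPJ
    have hm0pos : 0 < Nat.find hne := by
      rcases Nat.eq_zero_or_pos (Nat.find hne) with h | h
      · exfalso; have := Nat.find_spec hne; rw [h, hc0] at this; linarith
      · exact h
    refine ⟨Nat.find hne - 1, by omega, ?_, ?_⟩
    · have := Nat.find_min hne (show Nat.find hne - 1 < Nat.find hne by omega)
      exact not_lt.1 this
    · have hspec := Nat.find_spec hne
      have heq : Nat.find hne - 1 + 1 = Nat.find hne := by omega
      rw [heq]; exact hspec
  constructor
  · -- almost sure (in fact: sure) cardinality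
    filter_upwards [ae_restrict_mem measurableSet_Ico] with u hu
    obtain ⟨hu0, hu1⟩ := hu
    have hx : ∀ k : ℕ, ∃ j, k < K → (j < J ∧ c j ≤ u + k ∧ u + k < c (j + 1)) := by
      intro k
      by_cases hk : k < K
      · have hk' : (k : ℝ) + 1 ≤ (K : ℝ) := by exact_mod_cast hk
        obtain ⟨j, hj⟩ := hex (u + k) (by positivity) (by linarith)
        exact ⟨j, fun _ => hj⟩
      · exact ⟨0, fun h => absurd h hk⟩
    choose g hg using hx
    have hSet : {j : ℕ | j < J ∧ ∃ k < K, c j ≤ u + k ∧ u + k < c (j + 1)}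
        = g '' Set.Iio K := by
      ext j
      simp only [mem_setOf_eq, mem_image, mem_Iio]
      constructor
      · rintro ⟨hjJ, k, hk, h1, h2⟩
        obtain ⟨hgJ, hg1, hg2⟩ := hg k hk
        exact ⟨k, hk, (huniq (u + k) _ hgJ.le _ hjJ.le hg1 hg2 h1 h2).symm ▸ rfl⟩
      · rintro ⟨k, hk, rfl⟩
        obtain ⟨hgJ, hg1, hg2⟩ := hg k hk
        exact ⟨hgJ, k, hk, hg1, hg2⟩
    have hinj : Set.InjOn g (Set.Iio K) := by
      intro k hk k' hk' hkk
      obtain ⟨hgJ, hg1, hg2⟩ := hg k hk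
      obtain ⟨hgJ', hg1', hg2'⟩ := hg k' hk'
      rw [hkk] at hg1 hg2
      exact hkey (g k') hgJ' u k k' hg1 hg2 hg1' hg2'
    rw [hSet, Set.ncard_image_of_injOn hinj, ← Finset.coe_range,
      Set.ncard_coe_finset, Finset.card_range]
  · -- selection probability
    intro j hj
    have ha0 : 0 ≤ c j := by rw [← hc0]; exact hmono 0 j (Nat.zero_le _) hj.le
    have haK : c (j + 1) ≤ (K : ℝ) := by rw [← hcJ]; exact hmono (j + 1) J hj le_rfl
    set a := c j with ha
    set a' := c (j + 1) with ha'
    -- rewrite the event as a disjoint union of translated slices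
    have hDset : {u : ℝ | u ∈ Set.Ico (0:ℝ) 1 ∧ ∃ k < K, a ≤ u + k ∧ u + k < a'} =
        ⋃ k ∈ Finset.range K, ((· + (k : ℝ)) ⁻¹' (Ico a a' ∩ Ico (k : ℝ) ((k : ℝ) + 1))) := by
      ext u
      simp only [mem_iUnion, mem_preimage, mem_inter_iff, mem_Ico, Finset.mem_range,
        mem_setOf_eq, exists_prop]
      constructor
      · rintro ⟨⟨h0, h1⟩, k, hk, hk1, hk2⟩
        exact ⟨k, hk, ⟨hk1, hk2⟩, by linarith, by linarith⟩
      · rintro ⟨k, hk, ⟨hk1, hk2⟩, h3, h4⟩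
        exact ⟨⟨by linarith, by linarith⟩, k, hk, hk1, hk2⟩
    rw [hDset]
    have hdisj : (↑(Finset.range K) : Set ℕ).PairwiseDisjoint
        (fun k : ℕ => (· + (k : ℝ)) ⁻¹' (Ico a a' ∩ Ico (k : ℝ) ((k : ℝ) + 1))) := by
      intro k _ k' _ hkk
      refine Set.disjoint_left.2 fun u hu hu' => hkk ?_
      simp only [mem_preimage, mem_inter_iff, mem_Ico] at hu hu'
      exact hkey j hj u k k' hu.1.1 hu.1.2 hu'.1.1 hu'.1.2
    have hmeas : ∀ k ∈ Finset.range K, MeasurableSet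
        ((· + (k : ℝ)) ⁻¹' (Ico a a' ∩ Ico (k : ℝ) ((k : ℝ) + 1))) := by
      intro k _
      exact (measurableSet_Ico.inter measurableSet_Ico).preimage (measurable_add_const _)
    rw [measure_biUnion_finset hdisj hmeas]
    have htrans : ∀ k : ℕ,
        volume ((· + (k : ℝ)) ⁻¹' (Ico a a' ∩ Ico (k : ℝ) ((k : ℝ) + 1)))
        = volume (Ico a a' ∩ Ico (k : ℝ) ((k : ℝ) + 1)) := by
      intro k
      exact measure_preimage_add_right volume _ _
    simp_rw [htrans]
    -- disjoint slices of [c j, c (j+1))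
    have hdisj2 : (↑(Finset.range K) : Set ℕ).PairwiseDisjoint
        (fun k : ℕ => Ico a a' ∩ Ico (k : ℝ) ((k : ℝ) + 1)) := by
      intro k _ k' _ hkk
      refine Set.disjoint_left.2 fun x hx hx' => hkk ?_
      simp only [mem_inter_iff, mem_Ico] at hx hx'
      have h1 := hx.2.1; have h2 := hx.2.2
      have h3 := hx'.2.1; have h4 := hx'.2.2
      have hkr : (k : ℝ) = (k' : ℝ) := by
        rcases Nat.lt_or_ge k k' with h | h
        · have : (k : ℝ) + 1 ≤ (k' : ℝ) := by exact_mod_cast h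
          linarith
        · rcases Nat.lt_or_ge k' k with h' | h'
          · have : (k' : ℝ) + 1 ≤ (k : ℝ) := by exact_mod_cast h'
            linarith
          · have := le_antisymm h' h
            exact_mod_cast this
      exact_mod_cast hkr
    have hmeas2 : ∀ k ∈ Finset.range K,
        MeasurableSet (Ico a a' ∩ Ico (k : ℝ) ((k : ℝ) + 1)) := fun k _ =>
      measurableSet_Ico.inter measurableSet_Ico
    rw [← measure_biUnion_finset hdisj2 hmeas2]
    have hcover : ⋃ k ∈ Finset.range K, (Ico a a' ∩ Ico (k : ℝ) ((k : ℝ) + 1)) = Ico a a' := by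
      ext x
      simp only [mem_iUnion, mem_inter_iff, mem_Ico, Finset.mem_range, exists_prop]
      constructor
      · rintro ⟨k, _, hx, _⟩; exact hx
      · rintro ⟨h1, h2⟩
        have hx0 : 0 ≤ x := le_trans ha0 h1
        have hxK : x < (K : ℝ) := lt_of_lt_of_le h2 haK
        refine ⟨⌊x⌋.toNat, ?_, ⟨h1, h2⟩, ?_, ?_⟩
        · have h5 : (⌊x⌋ : ℝ) < (K : ℝ) := lt_of_le_of_lt (Int.floor_le x) hxK
          have h6 : ⌊x⌋ < (K : ℤ) := by exact_mod_cast h5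
          omega
        · have h7 : (0 : ℤ) ≤ ⌊x⌋ := Int.floor_nonneg.2 hx0
          have : ((⌊x⌋.toNat : ℤ) : ℝ) ≤ x := by rw [Int.toNat_of_nonneg h7]; exact Int.floor_le x
          exact_mod_cast this
        · have h7 : (0 : ℤ) ≤ ⌊x⌋ := Int.floor_nonneg.2 hx0
          have : x < ((⌊x⌋.toNat : ℤ) : ℝ) + 1 := by
            rw [Int.toNat_of_nonneg h7]; exact Int.lt_floor_add_one x
          exact_mod_cast this
    rw [hcover, Real.volume_Ico]
    congr 1
    rw [ha, ha', hstep j]; ring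
end
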